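/- Let G' be an undirected graph on vertex set V, where each vertex is colored blue if its degree is at most 2 and red otherwise, and each edge is blue if both endpoints are blue, red if both are red, and purple otherwise. If G' contains no cycle consisting only of red edges, then the number of edges of G' is less than 2|V|. -/

import Mathlib

open Finset

section Prelude

variable {V : Type*}

/-- A (directed) path in the graph with edge relation `E`: nonempty, consecutive
vertices joined by edges, and vertices pairwise distinct. -/
def IsPathOn (E : V → V → Prop) (p : List V) : Prop :=
  p ≠ [] ∧ p.Chain' E ∧ p.Nodup

/-- Reachability in the graph with edge relation `E`. -/
def Reaches (E : V → V → Prop) : V → V → Prop := Relation.ReflTransGen E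

/-- The edges of a path, as the list of consecutive pairs of vertices. -/
def pathEdges (p : List V) : List (V × V) := p.zip p.tail

/-- A path cover: a multiset of paths such that every vertex is on some path. -/
def IsPathCover (E : V → V → Prop) (P : Multiset (List V)) : Prop :=
  (∀ p ∈ P, IsPathOn E p) ∧ ∀ v : V, ∃ p ∈ P, v ∈ p

/-- The width of a graph: the minimum size of a path cover. -/
noncomputable def gwidth (E : V → V → Prop) : ℕ :=
  sInf {n | ∃ P : Multiset (List V), IsPathCover E P ∧ Multiset.card P = n}

/-- A DAG: no proper (directed) cycles. -/
def IsDAG (E : V → V → Prop) : Prop := ∀ v, ¬ Relation.TransGen E v v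

/-- The edge relation of a finite edge set. -/
def edgeRel (E : Finset (V × V)) : V → V → Prop := fun a b => (a, b) ∈ E

/-- Multiplicity of an edge with respect to a multiset of paths. -/
def mult [DecidableEq V] (P : Multiset (List V)) (e : V × V) : ℕ :=
  Multiset.countP (fun p => e ∈ pathEdges p) P

/-- A flow network: a finite edge set, source, sink, and lower bounds (demands). -/
structure FlowNet (V : Type*) where
  E : Finset (V × V)
  s : V
  t : V
  d : V × V → ℕ

/-- A flow: supported on edges, satisfying the demands, and flow conservation at
every vertex other than the source and the sink. -/
def IsFlow [Fintype V] (N : FlowNet V) (f : V × V → ℕ) : Prop :=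
  (∀ e, e ∉ N.E → f e = 0) ∧ (∀ e ∈ N.E, N.d e ≤ f e) ∧
  ∀ v : V, v ≠ N.s → v ≠ N.t → (∑ u : V, f (u, v)) = ∑ u : V, f (v, u)

/-- The size of a flow: net outflow at the source. -/
def flowSize [Fintype V] (N : FlowNet V) (f : V × V → ℕ) : ℤ :=
  (∑ u : V, (f (N.s, u) : ℤ)) - ∑ u : V, (f (u, N.s) : ℤ)

/-- An `st`-cut, given by the source side `S` (the sink side is the complement). -/
def IsCut (N : FlowNet V) (S : Set V) : Prop := N.s ∈ S ∧ N.t ∉ S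

/-- A one-way cut: a cut with no edge crossing from `T = Sᶜ` to `S`. -/
def IsOwCut (N : FlowNet V) (S : Set V) : Prop :=
  IsCut N S ∧ ∀ e ∈ N.E, e.1 ∉ S → e.2 ∉ S

open Classical in
/-- The demand of a cut: sum of demands of edges crossing from `S` to `T`. -/
noncomputable def cutDemand (N : FlowNet V) (S : Set V) : ℕ :=
  ∑ e ∈ N.E.filter (fun e => e.1 ∈ S ∧ e.2 ∉ S), N.d e

open Classical in
/-- The net flow across a cut: flow from `S` to `T` minus flow from `T` to `S`. -/
noncomputable def cutFlow (N : FlowNet V) (S : Set V) (f : V × V → ℕ) : ℤ :=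
  (∑ e ∈ N.E.filter (fun e => e.1 ∈ S ∧ e.2 ∉ S), (f e : ℤ))
    - ∑ e ∈ N.E.filter (fun e => e.1 ∉ S ∧ e.2 ∈ S), (f e : ℤ)

/-- The residual graph of a network w.r.t. a flow `f`: reverse edges of all edges,
plus the edges whose flow strictly exceeds the demand. -/
def ResidualEdge (N : FlowNet V) (f : V × V → ℕ) (u v : V) : Prop :=
  (v, u) ∈ N.E ∨ ((u, v) ∈ N.E ∧ N.d (u, v) < f (u, v))

/-- Vertices of the flow reduction: two copies of each vertex, plus source/sink. -/
abbrev FR (V : Type*) := (V ⊕ V) ⊕ Bool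

def vinF (v : V) : FR V := Sum.inl (Sum.inl v)
def voutF (v : V) : FR V := Sum.inl (Sum.inr v)
def fsrc : FR V := Sum.inr false
def fsnk : FR V := Sum.inr true

/-- Demands of the flow reduction: `1` on each edge `(vin v, vout v)`, else `0`. -/
def redD [DecidableEq V] : FR V × FR V → ℕ
  | (Sum.inl (Sum.inl a), Sum.inl (Sum.inr b)) => if a = b then 1 else 0
  | _ => 0

/-- The flow reduction of the DAG with edge set `E`. -/
def redNet [Fintype V] [DecidableEq V] (E : Finset (V × V)) : FlowNet (FR V) where
  E := (univ.image fun v : V => (fsrc, vinF v)) ∪ (univ.image fun v : V => (voutF v, fsnk))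
        ∪ (univ.image fun v : V => (vinF v, voutF v))
        ∪ (E.image fun e => (voutF e.1, vinF e.2))
  s := fsrc
  t := fsnk
  d := redD

/-- The layered cut `L^{≤ l}`: the source together with all split vertices of level `≤ l`. -/
def layerCut (ℓ : FR V → ℤ) (l : ℤ) : Set (FR V) :=
  {x | x = fsrc ∨ ((∃ v : V, x = vinF v ∨ x = voutF v) ∧ ℓ x ≤ l)}

open Classical in
/-- The layered antichain `A^l`. -/
noncomputable def layerAntichain [Fintype V] (ℓ : FR V → ℤ) (l : ℤ) : Finset V :=
  univ.filter (fun v => ℓ (vinF v) ≤ l ∧ l < ℓ (voutF v))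

end Prelude

section AuxForStmt16

open SimpleGraph Walk
open scoped Classical

private lemma forest_edge_lt {W : Type*} [Fintype W] [Nonempty W] (H : SimpleGraph W)
    [Fintype H.edgeSet] (hH : H.IsAcyclic) :
    H.edgeFinset.card < Fintype.card W := by
  classical
  let root : W → W := fun w => (H.connectedComponentMk w).out
  have hmk : ∀ w, H.connectedComponentMk (root w) = H.connectedComponentMk w :=
    fun w => (H.connectedComponentMk w).out_eq
  have hreach : ∀ w, H.Reachable w (root w) :=
    fun w => (ConnectedComponent.exact (hmk w)).symm
  have hrooteq : ∀ {a b : W}, H.Reachable a b → root a = root b := by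
    intro a b h
    show (H.connectedComponentMk a).out = (H.connectedComponentMk b).out
    rw [ConnectedComponent.sound h]
  have hEP : ∀ w, ∃! p : H.Walk w (root w), p.IsPath := by
    intro w
    obtain ⟨q⟩ := hreach w
    refine ⟨q.toPath, q.toPath.2, fun p hp => ?_⟩
    exact Subtype.ext_iff.mp (hH.path_unique ⟨p, hp⟩ q.toPath)
  choose f hf hf' using hEP
  have key : (univ.filter fun w => w ≠ root w).card = H.edgeFinset.card := by
    refine Finset.card_bij
      (fun w hw => ((f w).firstDart <| not_nil_of_ne (by simpa using hw)).edge)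
      (fun a ha => ?_) ?_ ?_
    · simp
    · intro a ha b hb h
      wlog h' : (f a).length ≤ (f b).length generalizing a b
      · exact ((this b hb a ha h.symm) (le_of_not_ge h')).symm
      have ha' : a ≠ root a := by simpa using ha
      have hb' : b ≠ root b := by simpa using hb
      rw [dart_edge_eq_iff] at h
      obtain h | h := h
      · exact congrArg (·.fst) h
      · have h1 : ((f a).firstDart <| not_nil_of_ne (by simpa using ha)).snd = b :=
          congrArg (·.snd) h
        have hadj : H.Adj a b := by
          have h2 := ((f a).firstDart <| not_nil_of_ne (by simpa using ha)).adj
          rwa [h1] at h2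
        have hr : root a = root b := hrooteq hadj.reachable
        have h3 := congrArg Walk.length (hf' b (((f a).tail).copy h1 hr) ?_)
        · erw [length_copy] at h3
          rw [← add_left_inj 1,
            length_tail_add_one (not_nil_of_ne ha')] at h3
          omega
        · simp only [ne_eq, eq_mp_eq_cast, id_eq, isPath_copy]
          exact (isPath_copy _ _ _).mpr (hf _).tail
    · intro e he
      induction e using Sym2.ind with
      | _ x y =>
        rw [mem_edgeFinset, SimpleGraph.mem_edgeSet] at he
        wlog h' : (f x).length ≤ (f y).length generalizing x y
        · rw [Sym2.eq_swap]
          exact this y x he.symm (le_of_not_ge h')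
        have hr : root x = root y := hrooteq he.reachable
        have hyne : y ≠ root y := by
          intro hy
          have h0 := congrArg Walk.length (hf' y ((Walk.nil' y).copy rfl hy) (by simp))
          have h1 := congrArg Walk.length
            (hf' x ((Walk.cons he (Walk.nil' y)).copy rfl (hy.trans hr.symm))
              (by simp [he.ne]))
          simp only [length_copy, length_nil, length_cons] at h0 h1
          omega
        have hxns : x ∉ ((f x)).support → True := fun _ => trivial
        have hnotmem : y ∉ (f x).support := by
          intro hy2
          have htu : ((f x).takeUntil y hy2) = Walk.cons he (Walk.nil' y) := by
            have := hH.path_unique ⟨(f x).takeUntil y hy2, (hf x).takeUntil hy2⟩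
              ⟨Walk.cons he (Walk.nil' y), by simp [he.ne]⟩
            exact Subtype.ext_iff.mp this
          have hsplit := congrArg Walk.length ((f x).take_spec hy2).symm
          have hdrop := congrArg Walk.length
            (hf' y (((f x).dropUntil y hy2).copy rfl hr) (by simp [(hf x).dropUntil hy2]))
          simp only [length_copy, length_append, htu, length_cons, length_nil] at hsplit hdrop
          omega
        have hfy : (Walk.cons he.symm (f x)).copy rfl hr = f y :=
          hf' y _ (by simp [hf x, hnotmem])
        have hv1 : (f y).getVert 1 = x := by
          rw [← hfy]; simp
        refine ⟨y, by simpa using hyne, ?_⟩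
        show ((f y).firstDart _).edge = s(x, y)
        rw [edge_firstDart, show (f y).snd = x from hv1, Sym2.eq_swap]
  have hss : (univ.filter fun w => w ≠ root w) ⊂ univ := by
    rw [Finset.ssubset_univ_iff]
    intro huniv
    have a := Classical.arbitrary W
    have hmem : root a ∈ univ.filter fun w => w ≠ root w := by
      rw [huniv]; exact Finset.mem_univ _
    rw [Finset.mem_filter] at hmem
    exact hmem.2 (hrooteq (hreach a).symm).symm
  calc H.edgeFinset.card = _ := key.symm
    _ < univ.card := Finset.card_lt_card hss
    _ = Fintype.card W := Finset.card_univ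

private lemma red_edges_lt {V : Type*} [Fintype V] (G : SimpleGraph V)
    [DecidableRel G.Adj]
    (hnored : ¬ ∃ (v : V) (w : G.Walk v v), w.IsCycle ∧
      ∀ e ∈ w.edges, ∀ x ∈ e, 2 < G.degree x)
    (hR : (univ.filter fun v : V => 2 < G.degree v).Nonempty) :
    (G.edgeFinset.filter fun e => ∀ x ∈ e, 2 < G.degree x).card <
      (univ.filter fun v : V => 2 < G.degree v).card := by
  classical
  let s : Set V := {v : V | 2 < G.degree v}
  let H : SimpleGraph s := G.induce s
  haveI : Nonempty s := by
    obtain ⟨v, hv⟩ := hR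
    rw [Finset.mem_filter] at hv
    exact ⟨⟨v, hv.2⟩⟩
  haveI : Fintype H.edgeSet := Fintype.ofFinite _
  have hac : H.IsAcyclic := by
    intro v c hc
    apply hnored
    refine ⟨v.1, c.map (SimpleGraph.Embedding.induce (G := G) s).toHom,
      hc.map (SimpleGraph.Embedding.induce (G := G) s).injective, ?_⟩
    intro e he x hx
    erw [Walk.edges_map] at he
    rw [List.mem_map] at he
    obtain ⟨e', he', rfl⟩ := he
    rw [Sym2.mem_map] at hx
    obtain ⟨a, _, rfl⟩ := hx
    exact a.2
  have hsub : (G.edgeFinset.filter fun e => ∀ x ∈ e, 2 < G.degree x) ⊆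
      H.edgeFinset.image (Sym2.map (Subtype.val : s → V)) := by
    intro e he
    rw [Finset.mem_filter] at he
    induction e using Sym2.ind with
    | _ u v =>
      have hu : 2 < G.degree u := he.2 u (by simp)
      have hv : 2 < G.degree v := he.2 v (by simp)
      have hadj : G.Adj u v := by
        have h := he.1; rwa [mem_edgeFinset, SimpleGraph.mem_edgeSet] at h
      refine Finset.mem_image.2 ⟨s(⟨u, hu⟩, ⟨v, hv⟩), ?_, by simp⟩
      rw [mem_edgeFinset, SimpleGraph.mem_edgeSet]
      exact hadj
  have hcards : Fintype.card s = (univ.filter fun v : V => 2 < G.degree v).card :=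
    Fintype.card_subtype _
  calc (G.edgeFinset.filter fun e => ∀ x ∈ e, 2 < G.degree x).card
      ≤ (H.edgeFinset.image (Sym2.map (Subtype.val : s → V))).card :=
        Finset.card_le_card hsub
    _ ≤ H.edgeFinset.card := Finset.card_image_le
    _ < Fintype.card s := forest_edge_lt H hac
    _ = (univ.filter fun v : V => 2 < G.degree v).card := hcards

private lemma rest_edges_le {V : Type*} [Fintype V] (G : SimpleGraph V)
    [DecidableRel G.Adj] :
    (G.edgeFinset.filter fun e => ¬ ∀ x ∈ e, 2 < G.degree x).card ≤
      2 * (univ.filter fun v : V => ¬ 2 < G.degree v).card := by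
  classical
  have hsub : (G.edgeFinset.filter fun e => ¬ ∀ x ∈ e, 2 < G.degree x) ⊆
      (univ.filter fun v : V => ¬ 2 < G.degree v).biUnion (fun v => G.incidenceFinset v) := by
    intro e he
    rw [Finset.mem_filter] at he
    obtain ⟨he1, he2⟩ := he
    push_neg at he2
    obtain ⟨x, hx, hxd⟩ := he2
    refine Finset.mem_biUnion.2 ⟨x, Finset.mem_filter.2 ⟨Finset.mem_univ _, by omega⟩, ?_⟩
    rw [mem_incidenceFinset]
    exact ⟨(mem_edgeFinset.1 he1), hx⟩
  refine (Finset.card_le_card hsub).trans ?_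
  refine Finset.card_biUnion_le.trans ?_
  have h1 : ∀ v ∈ (univ.filter fun v : V => ¬ 2 < G.degree v),
      (G.incidenceFinset v).card ≤ 2 := by
    intro v hv
    rw [Finset.mem_filter] at hv
    rw [G.card_incidenceFinset_eq_degree v]
    omega
  calc ∑ v ∈ univ.filter fun v : V => ¬ 2 < G.degree v, (G.incidenceFinset v).card
      ≤ ∑ _v ∈ univ.filter fun v : V => ¬ 2 < G.degree v, 2 := Finset.sum_le_sum h1
    _ = 2 * (univ.filter fun v : V => ¬ 2 < G.degree v).card := by
        rw [Finset.sum_const, smul_eq_mul, mul_comm]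

end AuxForStmt16

/-- color vertices blue (degree ≤ 2) or red, and edges accordingly; if
an undirected graph has no cycle consisting only of red edges, then it has fewer than
`2|V|` edges. -/
theorem stmt_16 {V : Type*} [Fintype V] [Nonempty V] (G : SimpleGraph V)
    [DecidableRel G.Adj]
    (hnored : ¬ ∃ (v : V) (w : G.Walk v v), w.IsCycle ∧
      ∀ e ∈ w.edges, ∀ x ∈ e, 2 < G.degree x) :
    G.edgeFinset.card < 2 * Fintype.card V := by
  classical
  by_cases hR : (univ.filter fun v : V => 2 < G.degree v).Nonempty
  · have hred := red_edges_lt G hnored hR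
    have hrest := rest_edges_le G
    have hpart : (G.edgeFinset.filter fun e => ∀ x ∈ e, 2 < G.degree x).card +
        (G.edgeFinset.filter fun e => ¬ ∀ x ∈ e, 2 < G.degree x).card =
        G.edgeFinset.card := Finset.card_filter_add_card_filter_not _
    have hvert : (univ.filter fun v : V => 2 < G.degree v).card +
        (univ.filter fun v : V => ¬ 2 < G.degree v).card = Fintype.card V := by
      rw [← Finset.card_univ]
      exact Finset.card_filter_add_card_filter_not _
    omega
  · have hdeg : ∀ v : V, G.degree v ≤ 2 := by
      intro v
      by_contra h
      exact hR ⟨v, Finset.mem_filter.2 ⟨Finset.mem_univ _, by omega⟩⟩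
    have h1 : ∑ v : V, G.degree v = 2 * G.edgeFinset.card :=
      G.sum_degrees_eq_twice_card_edges
    have h2 : ∑ v : V, G.degree v ≤ ∑ _v : V, 2 :=
      Finset.sum_le_sum fun v _ => hdeg v
    have h3 : ∑ _v : V, 2 = 2 * Fintype.card V := by
      rw [Finset.sum_const, smul_eq_mul, mul_comm, Finset.card_univ]
    have h4 : 0 < Fintype.card V := Fintype.card_pos
    omega
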